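/- Let A ⊆ B be finite metric spaces with rational distances, f an isometry of A, and g an isometry of B leaving A invariant with g restricted to A equal to f^n for some n ≥ 1. Then there exist a finite rational metric space D containing B and an isometry h of D extending f such that h^n leaves B invariant and h^n restricted to B equals g. -/

import Mathlib

open Function

set_option linter.unusedSectionVars false
namespace Stmt10Aux

variable {B : Type*} [MetricSpace B] [Fintype B]

noncomputable def qd (hQ : ∀ x y : B, ∃ q : ℚ, dist x y = (q : ℝ)) (x y : B) : ℚ :=
  (hQ x y).choose

lemma qd_spec (hQ : ∀ x y : B, ∃ q : ℚ, dist x y = (q : ℝ)) (x y : B) :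
    ((qd hQ x y : ℚ) : ℝ) = dist x y := ((hQ x y).choose_spec).symm

variable (hQ : ∀ x y : B, ∃ q : ℚ, dist x y = (q : ℝ))

lemma qd_comm (x y : B) : qd hQ x y = qd hQ y x := by
  have h1 := qd_spec hQ x y; have h2 := qd_spec hQ y x
  have : ((qd hQ x y : ℚ) : ℝ) = ((qd hQ y x : ℚ) : ℝ) := by rw [h1, h2, dist_comm]
  exact_mod_cast this

lemma qd_self (x : B) : qd hQ x x = 0 := by
  have := qd_spec hQ x x; rw [dist_self] at this; exact_mod_cast this

lemma qd_nonneg (x y : B) : 0 ≤ qd hQ x y := by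
  have := qd_spec hQ x y
  have h2 : (0:ℝ) ≤ dist x y := dist_nonneg
  rw [← this] at h2; exact_mod_cast h2

lemma qd_triangle (x y z : B) : qd hQ x z ≤ qd hQ x y + qd hQ y z := by
  have h1 := qd_spec hQ x z; have h2 := qd_spec hQ x y; have h3 := qd_spec hQ y z
  have := dist_triangle x y z
  rw [← h1, ← h2, ← h3] at this; exact_mod_cast this

noncomputable def CC : ℚ :=
  (Finset.univ : Finset (B × B)).fold max 0 (fun p => qd hQ p.1 p.2)

lemma CC_nonneg : 0 ≤ CC hQ := (Finset.le_fold_max _).2 (Or.inl le_rfl)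

lemma qd_le_CC (x y : B) : qd hQ x y ≤ CC hQ :=
  (Finset.le_fold_max _).2 (Or.inr ⟨(x, y), Finset.mem_univ _, le_rfl⟩)


variable (A : Set B) [Fintype ↥A] (f : A ≃ A)
  (hf : ∀ x y : A, dist ((f x : A) : B) ((f y : A) : B) = dist (x : B) (y : B))

/-- the representative of `a` in copy `i`. -/
def ι (i : ℕ) (a : A) : A := (⇑f.symm)^[i] a

include hf in
lemma qd_iota (i : ℕ) (a b : A) :
    qd hQ (ι A f i a : B) (ι A f i b : B) = qd hQ (a : B) (b : B) := by
  have hsym : ∀ x y : A, dist ((f.symm x : A) : B) ((f.symm y : A) : B)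
      = dist (x : B) (y : B) := by
    intro x y
    have := hf (f.symm x) (f.symm y)
    simp only [Equiv.apply_symm_apply] at this
    exact this.symm
  have hd : ∀ (i : ℕ) (a b : A),
      dist ((ι A f i a : A) : B) ((ι A f i b : A) : B) = dist (a : B) (b : B) := by
    intro i
    induction i with
    | zero => intro a b; rfl
    | succ k ih =>
      intro a b
      simp only [ι, Function.iterate_succ_apply]
      exact (ih (f.symm a) (f.symm b)).trans (hsym a b)
  have h1 := qd_spec hQ (ι A f i a : B) (ι A f i b : B)
  have h2 := qd_spec hQ (a : B) (b : B)
  have : ((qd hQ (ι A f i a : B) (ι A f i b : B) : ℚ) : ℝ)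
      = ((qd hQ (a : B) (b : B) : ℚ) : ℝ) := by rw [h1, h2, hd]
  exact_mod_cast this

variable (n : ℕ)

/-- candidate distances between different copies -/
noncomputable def cand (i j : Fin n) (x y : B) : Option A → ℚ
  | none => CC hQ
  | some a => qd hQ x (ι A f i.val a : B) + qd hQ (ι A f j.val a : B) y

lemma cand_nonneg (i j : Fin n) (x y : B) (o : Option A) : 0 ≤ cand hQ A f n i j x y o := by
  cases o with
  | none => exact CC_nonneg hQ
  | some a => exact add_nonneg (qd_nonneg hQ _ _) (qd_nonneg hQ _ _)

noncomputable def md (i j : Fin n) (x y : B) : ℚ :=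
  Finset.univ.inf' Finset.univ_nonempty (cand hQ A f n i j x y)

lemma md_le (i j : Fin n) (x y : B) (o : Option A) :
    md hQ A f n i j x y ≤ cand hQ A f n i j x y o :=
  Finset.inf'_le _ (Finset.mem_univ o)

lemma le_md (i j : Fin n) (x y : B) (c : ℚ)
    (h : ∀ o, c ≤ cand hQ A f n i j x y o) : c ≤ md hQ A f n i j x y :=
  Finset.le_inf' _ _ (fun o _ => h o)

lemma md_exists (i j : Fin n) (x y : B) :
    ∃ o, md hQ A f n i j x y = cand hQ A f n i j x y o := by
  obtain ⟨o, -, h⟩ := Finset.exists_mem_eq_inf' Finset.univ_nonempty (cand hQ A f n i j x y)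
  exact ⟨o, h⟩

lemma md_nonneg (i j : Fin n) (x y : B) : 0 ≤ md hQ A f n i j x y :=
  le_md hQ A f n i j x y 0 (cand_nonneg hQ A f n i j x y)

lemma md_comm (i j : Fin n) (x y : B) : md hQ A f n i j x y = md hQ A f n j i y x := by
  unfold md
  refine Finset.inf'_congr _ rfl (fun o _ => ?_)
  cases o with
  | none => rfl
  | some a => simp only [cand]; rw [qd_comm hQ x, qd_comm hQ _ y, add_comm]

/-- the pseudo-distance on `Fin n × B` -/
noncomputable def pd (p q : Fin n × B) : ℚ :=
  if p.1 = q.1 then qd hQ p.2 q.2 else md hQ A f n p.1 q.1 p.2 q.2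

lemma pd_self (p : Fin n × B) : pd hQ A f n p p = 0 := by
  simp [pd, qd_self]

lemma pd_comm (p q : Fin n × B) : pd hQ A f n p q = pd hQ A f n q p := by
  unfold pd
  by_cases h : p.1 = q.1
  · rw [if_pos h, if_pos h.symm, qd_comm]
  · rw [if_neg h, if_neg (fun hh => h hh.symm), md_comm]

lemma tri1 (i k : Fin n) (x y z : B) :
    md hQ A f n i k x z ≤ qd hQ x y + md hQ A f n i k y z := by
  have h : md hQ A f n i k x z - qd hQ x y ≤ md hQ A f n i k y z := by
    refine le_md hQ A f n i k y z _ (fun o => ?_)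
    cases o with
    | none =>
      have h1 := md_le hQ A f n i k x z none
      have h0 := qd_nonneg hQ x y
      simp only [cand] at h1 ⊢
      linarith
    | some a =>
      have h1 := md_le hQ A f n i k x z (some a)
      have t := qd_triangle hQ x y (ι A f i.val a : B)
      simp only [cand] at h1 ⊢
      linarith
  linarith

lemma tri2 (i j : Fin n) (x y z : B) :
    md hQ A f n i j x z ≤ md hQ A f n i j x y + qd hQ y z := by
  have h : md hQ A f n i j x z - qd hQ y z ≤ md hQ A f n i j x y := by
    refine le_md hQ A f n i j x y _ (fun o => ?_)
    cases o with
    | none =>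
      have h1 := md_le hQ A f n i j x z none
      have h0 := qd_nonneg hQ y z
      simp only [cand] at h1 ⊢
      linarith
    | some a =>
      have h1 := md_le hQ A f n i j x z (some a)
      have t := qd_triangle hQ (ι A f j.val a : B) y z
      simp only [cand] at h1 ⊢
      linarith
  linarith

include hf in
lemma tri3 (i j : Fin n) (x y z : B) :
    qd hQ x z ≤ md hQ A f n i j x y + md hQ A f n j i y z := by
  obtain ⟨o1, ho1⟩ := md_exists hQ A f n i j x y
  obtain ⟨o2, ho2⟩ := md_exists hQ A f n j i y z
  rw [ho1, ho2]
  match o1, o2 with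
  | none, o2 =>
    have h1 := qd_le_CC hQ x z
    have h2 := cand_nonneg hQ A f n j i y z o2
    have e : cand hQ A f n i j x y none = CC hQ := rfl
    rw [e]
    linarith
  | some a, none =>
    have h1 := qd_le_CC hQ x z
    have h2 := cand_nonneg hQ A f n i j x y (some a)
    simp only [cand] at h2 ⊢
    linarith
  | some a, some b =>
    simp only [cand]
    have t1 := qd_triangle hQ x (ι A f i.val a : B) z
    have t2 := qd_triangle hQ (ι A f i.val a : B) (ι A f i.val b : B) z
    have e1 : qd hQ (ι A f i.val a : B) (ι A f i.val b : B)
        = qd hQ (ι A f j.val a : B) (ι A f j.val b : B) := by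
      rw [qd_iota hQ A f hf, qd_iota hQ A f hf]
    have t3 := qd_triangle hQ (ι A f j.val a : B) y (ι A f j.val b : B)
    have c1 := qd_comm hQ y (ι A f j.val b : B)
    have c2 := qd_comm hQ (ι A f i.val b : B) z
    linarith

include hf in
lemma tri4 (i j k : Fin n) (x y z : B) :
    md hQ A f n i k x z ≤ md hQ A f n i j x y + md hQ A f n j k y z := by
  obtain ⟨o1, ho1⟩ := md_exists hQ A f n i j x y
  obtain ⟨o2, ho2⟩ := md_exists hQ A f n j k y z
  rw [ho1, ho2]
  match o1, o2 with
  | none, o2 =>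
    have h1 := md_le hQ A f n i k x z none
    have h2 := cand_nonneg hQ A f n j k y z o2
    have e : cand hQ A f n i j x y none = CC hQ := rfl
    simp only [cand] at h1
    rw [e]
    linarith
  | some a, none =>
    have h1 := md_le hQ A f n i k x z none
    have h2 := cand_nonneg hQ A f n i j x y (some a)
    simp only [cand] at h1 h2 ⊢
    linarith
  | some a, some b =>
    have h1 := md_le hQ A f n i k x z (some a)
    have t2 := qd_triangle hQ (ι A f k.val a : B) (ι A f k.val b : B) z
    have e1 : qd hQ (ι A f k.val a : B) (ι A f k.val b : B)
        = qd hQ (ι A f j.val a : B) (ι A f j.val b : B) := by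
      rw [qd_iota hQ A f hf, qd_iota hQ A f hf]
    have t3 := qd_triangle hQ (ι A f j.val a : B) y (ι A f j.val b : B)
    have c1 := qd_comm hQ y (ι A f j.val b : B)
    simp only [cand] at h1 ⊢
    linarith

include hf in
lemma pd_triangle (p q r : Fin n × B) :
    pd hQ A f n p r ≤ pd hQ A f n p q + pd hQ A f n q r := by
  obtain ⟨i, x⟩ := p; obtain ⟨j, y⟩ := q; obtain ⟨k, z⟩ := r
  unfold pd
  simp only
  by_cases hij : i = j
  · subst hij
    by_cases hik : i = k
    · subst hik
      rw [if_pos rfl, if_pos rfl, if_pos rfl]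
      exact qd_triangle hQ x y z
    · rw [if_neg hik, if_pos rfl, if_neg hik]
      exact tri1 hQ A f n i k x y z
  · by_cases hjk : j = k
    · subst hjk
      rw [if_neg hij, if_neg hij, if_pos rfl]
      exact tri2 hQ A f n i j x y z
    · by_cases hik : i = k
      · subst hik
        rw [if_pos rfl, if_neg hij, if_neg (fun hh => hij hh.symm)]
        exact tri3 hQ A f hf n i j x y z
      · rw [if_neg hik, if_neg hij, if_neg hjk]
        exact tri4 hQ A f hf n i j k x y z

variable (g : B ≃ B)

include hQ in
lemma qd_g (hg : ∀ x y : B, dist (g x) (g y) = dist x y) (x y : B) :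
    qd hQ (g x) (g y) = qd hQ x y := by
  have h1 := qd_spec hQ (g x) (g y)
  have h2 := qd_spec hQ x y
  have : ((qd hQ (g x) (g y) : ℚ) : ℝ) = ((qd hQ x y : ℚ) : ℝ) := by
    rw [h1, h2, hg]
  exact_mod_cast this

/-- the shift map on `Fin n × B` -/
def h0 [NeZero n] : Fin n × B → Fin n × B :=
  fun p => (p.1 + 1, if p.1.val = n - 1 then g p.2 else p.2)

lemma iterate_apply_symm (k : ℕ) (a : A) : (⇑f)^[k] ((⇑f.symm)^[k] a) = a :=
  (Function.LeftInverse.iterate f.apply_symm_apply k) a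

include hf in
lemma key [NeZero n] (hg : ∀ x y : B, dist (g x) (g y) = dist x y)
    (hgf : ∀ a : A, g (a : B) = ((⇑f)^[n] a : B))
    (i : Fin n) (x : B) (a : A) :
    qd hQ (if i.val = n - 1 then g x else x) (ι A f (i+1).val (f a) : B)
      = qd hQ x (ι A f i.val a : B) := by
  obtain ⟨m, rfl⟩ : ∃ m, n = m + 1 := ⟨n - 1, by
    have := Nat.pos_of_ne_zero (NeZero.ne n); omega⟩
  by_cases hi : i.val = m + 1 - 1
  · rw [if_pos hi]
    have hlast : i = Fin.last m := Fin.ext (by simpa using hi)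
    have hv : (i+1).val = 0 := by
      rw [Fin.val_add_one, if_pos hlast]
    rw [hv]
    have h0' : (ι A f 0 (f a) : B) = ((f a : A) : B) := rfl
    rw [h0']
    have hc : ((f a : A) : B) = g ((ι A f i.val a : A) : B) := by
      rw [hgf (ι A f i.val a)]
      have : (⇑f)^[m+1] (ι A f i.val a) = f a := by
        have hsplit : (⇑f)^[m+1] (ι A f i.val a) = (⇑f)^[1 + m] ((⇑f.symm)^[m] a) := by
          unfold ι
          rw [hi]
          simp only [Nat.add_sub_cancel]
          rw [Nat.add_comm m 1]
        rw [hsplit, Function.iterate_add_apply, iterate_apply_symm A f]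
        rfl
      rw [this]
    rw [hc, qd_g hQ g hg]
  · rw [if_neg hi]
    have hlast : i ≠ Fin.last m := fun h => hi (by simp [h])
    have hv : (i+1).val = i.val + 1 := by
      rw [Fin.val_add_one, if_neg hlast]
    rw [hv]
    have : ι A f (i.val + 1) (f a) = ι A f i.val a := by
      unfold ι
      rw [Function.iterate_succ_apply, Equiv.symm_apply_apply]
    rw [this]

include hf in
lemma pd_h0 [NeZero n] (hg : ∀ x y : B, dist (g x) (g y) = dist x y)
    (hgf : ∀ a : A, g (a : B) = ((⇑f)^[n] a : B))
    (p q : Fin n × B) :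
    pd hQ A f n (h0 n g p) (h0 n g q) = pd hQ A f n p q := by
  obtain ⟨i, x⟩ := p; obtain ⟨j, y⟩ := q
  show pd hQ A f n (i + 1, if i.val = n - 1 then g x else x)
      (j + 1, if j.val = n - 1 then g y else y) = pd hQ A f n (i, x) (j, y)
  set x' := if i.val = n - 1 then g x else x with hx'
  set y' := if j.val = n - 1 then g y else y with hy'
  by_cases hij : i = j
  · subst hij
    show (if i + 1 = i + 1 then qd hQ x' y' else _) = (if i = i then qd hQ x y else _)
    rw [if_pos rfl, if_pos rfl]
    by_cases hi : i.val = n - 1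
    · rw [hx', hy', if_pos hi, if_pos hi, qd_g hQ g hg]
    · rw [hx', hy', if_neg hi, if_neg hi]
  · have hij' : i + 1 ≠ j + 1 := fun h => hij (add_right_cancel h)
    show (if i + 1 = j + 1 then _ else md hQ A f n (i+1) (j+1) x' y')
        = (if i = j then _ else md hQ A f n i j x y)
    rw [if_neg hij, if_neg hij']
    have hcand : ∀ o : Option A,
        cand hQ A f n (i+1) (j+1) x' y' (Option.map f o) = cand hQ A f n i j x y o := by
      intro o
      cases o with
      | none => rfl
      | some a =>
        show qd hQ x' (ι A f (i+1).val (f a) : B) + qd hQ (ι A f (j+1).val (f a) : B) y'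
          = qd hQ x (ι A f i.val a : B) + qd hQ (ι A f j.val a : B) y
        rw [hx', hy', key hQ A f hf n g hg hgf i x a]
        congr 1
        rw [qd_comm hQ, key hQ A f hf n g hg hgf j y a, qd_comm hQ]
    apply le_antisymm
    · refine le_md hQ A f n i j x y _ (fun o => ?_)
      exact (md_le hQ A f n (i+1) (j+1) x' y' (Option.map f o)).trans_eq (hcand o)
    · refine le_md hQ A f n (i+1) (j+1) x' y' _ (fun o => ?_)
      have ho : Option.map (⇑f) (Option.map (⇑f.symm) o) = o := by
        cases o with
        | none => rfl
        | some a => simp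
      calc md hQ A f n i j x y ≤ cand hQ A f n i j x y (Option.map f.symm o) :=
            md_le hQ A f n i j x y _
        _ = cand hQ A f n (i+1) (j+1) x' y' (Option.map f (Option.map f.symm o)) :=
            (hcand (Option.map f.symm o)).symm
        _ = cand hQ A f n (i+1) (j+1) x' y' o := by rw [ho]

lemma pd_fst_eq (p q : Fin n × B) (h : p.1 = q.1) :
    pd hQ A f n p q = qd hQ p.2 q.2 := if_pos h

lemma pd_fst_ne (p q : Fin n × B) (h : p.1 ≠ q.1) :
    pd hQ A f n p q = md hQ A f n p.1 q.1 p.2 q.2 := if_neg h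

lemma pd_glue (i j : Fin n) (a : A) :
    pd hQ A f n (i, ((ι A f i.val a : A) : B)) (j, ((ι A f j.val a : A) : B)) = 0 := by
  by_cases hij : i = j
  · subst hij
    rw [pd_fst_eq hQ A f n _ _ rfl, qd_self]
  · rw [pd_fst_ne hQ A f n _ _ hij]
    refine le_antisymm ?_ (md_nonneg hQ A f n _ _ _ _)
    have h1 := md_le hQ A f n i j ((ι A f i.val a : A) : B) ((ι A f j.val a : A) : B) (some a)
    simp only [cand, qd_self] at h1
    simpa using h1

lemma g_iota [NeZero n]
    (hgf : ∀ a : A, g (a : B) = ((⇑f)^[n] a : B)) (a : A) :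
    g ((ι A f (n-1) a : A) : B) = ((f a : A) : B) := by
  rw [hgf (ι A f (n-1) a)]
  have : (⇑f)^[n] (ι A f (n-1) a) = f a := by
    obtain ⟨m, rfl⟩ : ∃ m, n = m + 1 := ⟨n - 1, by
      have := Nat.pos_of_ne_zero (NeZero.ne n); omega⟩
    show (⇑f)^[m+1] ((⇑f.symm)^[m] a) = f a
    rw [show m + 1 = 1 + m from Nat.add_comm m 1, Function.iterate_add_apply,
      iterate_apply_symm A f]
    rfl
  rw [this]

lemma h0_last [NeZero n] (p : Fin n × B) (hp : p.1.val = n - 1) :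
    h0 n g p = (p.1 + 1, g p.2) := by
  simp only [h0, if_pos hp]

lemma h0_not_last [NeZero n] (p : Fin n × B) (hp : p.1.val ≠ n - 1) :
    h0 n g p = (p.1 + 1, p.2) := by
  simp only [h0, if_neg hp]

/-- type synonym to carry the amalgam pseudometric -/
def Amal (n : ℕ) (B : Type u) : Type u := Fin n × B

/-- identity map into the synonym -/
def toAmal {n : ℕ} {B : Type u} : Fin n × B → Amal n B := fun p => p

lemma toAmal_injective {n : ℕ} {B : Type u} : Function.Injective (toAmal : Fin n × B → Amal n B) :=
  fun _ _ h => h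

lemma toAmal_surjective {n : ℕ} {B : Type u} :
    Function.Surjective (toAmal : Fin n × B → Amal n B) := fun p => ⟨p, rfl⟩

end Stmt10Aux

open Stmt10Aux

/-- Let `A ⊆ B` be finite metric spaces with rational distances, `f` an isometry of `A`, and
`g` an isometry of `B` leaving `A` invariant with `g` restricted to `A` equal to `f ^ n` for
some `n ≥ 1`. Then there are a finite rational metric space `D` containing `B` (via an
isometric embedding `e`) and an isometry `h` of `D` extending `f` such that `h ^ n` leaves
`B` invariant and `h ^ n` restricted to `B` equals `g`. -/
theorem stmt10 {B : Type*} [MetricSpace B] [Fintype B]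
    (hQ : ∀ x y : B, ∃ q : ℚ, dist x y = (q : ℝ))
    (A : Set B) (n : ℕ) (hn : 1 ≤ n)
    (f : A ≃ A) (hf : ∀ x y : A, dist (f x) (f y) = dist x y)
    (g : B ≃ B) (hg : ∀ x y : B, dist (g x) (g y) = dist x y)
    (hgA : ∀ a ∈ A, g a ∈ A)
    (hgf : ∀ a : A, g (a : B) = ((⇑f)^[n] a : B)) :
    ∃ (D : Type) (_ : MetricSpace D) (_ : Fintype D) (e : B → D) (h : D ≃ D),
      (∀ x y : D, ∃ q : ℚ, dist x y = (q : ℝ)) ∧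
      (∀ x y : B, dist (e x) (e y) = dist x y) ∧
      (∀ x y : D, dist (h x) (h y) = dist x y) ∧
      (∀ a : A, h (e (a : B)) = e ((f a : B))) ∧
      (∀ b : B, (⇑h)^[n] (e b) ∈ Set.range e) ∧
      (∀ b : B, (⇑h)^[n] (e b) = e (g b)) := by
  classical
  obtain ⟨m, rfl⟩ : ∃ m, n = m + 1 := ⟨n - 1, by omega⟩
  haveI : NeZero (m + 1) := ⟨by omega⟩
  haveI : Fintype ↥A := Fintype.ofFinite _
  have hf' : ∀ x y : A, dist ((f x : A) : B) ((f y : A) : B) = dist (x : B) (y : B) := by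
    intro x y
    have := hf x y
    rwa [Subtype.dist_eq, Subtype.dist_eq] at this
  haveI : Finite (Amal (m + 1) B) := Finite.of_surjective toAmal toAmal_surjective
  haveI : Fintype (Amal (m + 1) B) := Fintype.ofFinite _
  letI instX : PseudoMetricSpace (Amal (m + 1) B) :=
    { dist := fun p q => ((pd hQ A f (m + 1) p q : ℚ) : ℝ)
      dist_self := fun p => by
        show ((pd hQ A f (m + 1) p p : ℚ) : ℝ) = 0
        have hps := pd_self hQ A f (m + 1) p
        rw [hps]; norm_num
      dist_comm := fun p q => by
        show ((pd hQ A f (m + 1) p q : ℚ) : ℝ) = ((pd hQ A f (m + 1) q p : ℚ) : ℝ)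
        rw [pd_comm hQ A f (m + 1) p q]
      dist_triangle := fun p q r => by
        show ((pd hQ A f (m + 1) p r : ℚ) : ℝ) ≤ ((pd hQ A f (m + 1) p q : ℚ) : ℝ) + ((pd hQ A f (m + 1) q r : ℚ) : ℝ)
        have := pd_triangle hQ A f hf' (m + 1) p q r
        push_cast
        exact_mod_cast this }
  have dX : ∀ p q : Amal (m + 1) B, dist p q = ((pd hQ A f (m + 1) p q : ℚ) : ℝ) := fun _ _ => rfl
  let hA : Amal (m + 1) B → Amal (m + 1) B := fun p => toAmal (h0 (m + 1) g p)
  have hdist : ∀ p q : Amal (m + 1) B, dist (hA p) (hA q) = dist p q := by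
    intro p q
    rw [dX, dX]
    show ((pd hQ A f (m + 1) (h0 (m + 1) g p) (h0 (m + 1) g q) : ℚ) : ℝ) = _
    rw [pd_h0 hQ A f hf' (m + 1) g hg hgf p q]
  let SQ := SeparationQuotient (Amal (m + 1) B)
  haveI : Fintype SQ :=
    Fintype.ofSurjective SeparationQuotient.mk SeparationQuotient.surjective_mk
  have h0inj : Function.Injective (h0 (m + 1) g) := by
    intro p q hpq
    simp only [h0, Prod.mk.injEq] at hpq
    obtain ⟨h1, h2⟩ := hpq
    have h1' : p.1 = q.1 := add_right_cancel h1
    rw [h1'] at h2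
    by_cases hc : q.1.val = (m + 1) - 1
    · rw [if_pos hc, if_pos hc] at h2
      exact Prod.ext h1' (g.injective h2)
    · rw [if_neg hc, if_neg hc] at h2
      exact Prod.ext h1' h2
  have hAinj : Function.Injective hA := fun p q hpq => h0inj hpq
  let hAe : Amal (m + 1) B ≃ Amal (m + 1) B :=
    Equiv.ofBijective hA (Finite.injective_iff_bijective.1 hAinj)
  have compat : ∀ p q : Amal (m + 1) B, Inseparable p q → Inseparable (hA p) (hA q) := by
    intro p q hpq
    rw [Metric.inseparable_iff] at hpq ⊢
    rw [hdist p q]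
    exact hpq
  have compat' : ∀ p q : Amal (m + 1) B, Inseparable p q →
      Inseparable (hAe.symm p) (hAe.symm q) := by
    intro p q hpq
    rw [Metric.inseparable_iff] at hpq ⊢
    have hd2 : dist (hA (hAe.symm p)) (hA (hAe.symm q)) = dist (hAe.symm p) (hAe.symm q) :=
      hdist _ _
    rw [show hA (hAe.symm p) = p from hAe.apply_symm_apply p,
      show hA (hAe.symm q) = q from hAe.apply_symm_apply q] at hd2
    rw [← hd2]
    exact hpq
  let hSQ : SQ ≃ SQ :=
    { toFun := SeparationQuotient.lift (fun p => SeparationQuotient.mk (hA p))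
        (fun p q hpq => SeparationQuotient.mk_eq_mk.2 (compat p q hpq))
      invFun := SeparationQuotient.lift (fun p => SeparationQuotient.mk (hAe.symm p))
        (fun p q hpq => SeparationQuotient.mk_eq_mk.2 (compat' p q hpq))
      left_inv := by
        intro u
        obtain ⟨p, rfl⟩ := SeparationQuotient.surjective_mk u
        rw [SeparationQuotient.lift_mk, SeparationQuotient.lift_mk]
        congr 1
        exact hAe.symm_apply_apply p
      right_inv := by
        intro u
        obtain ⟨p, rfl⟩ := SeparationQuotient.surjective_mk u
        rw [SeparationQuotient.lift_mk, SeparationQuotient.lift_mk]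
        congr 1
        exact hAe.apply_symm_apply p }
  have hSQ_mk : ∀ p : Amal (m + 1) B,
      hSQ (SeparationQuotient.mk p) = SeparationQuotient.mk (hA p) :=
    fun p => rfl
  -- transport to Fin (card SQ)
  let mm := Fintype.card SQ
  let φ : SQ ≃ Fin mm := Fintype.equivFin SQ
  letI : MetricSpace (Fin mm) := MetricSpace.induced φ.symm φ.symm.injective inferInstance
  have key_dist : ∀ u v : SQ, dist (φ u) (φ v) = dist u v := by
    intro u v
    show dist (φ.symm (φ u)) (φ.symm (φ v)) = dist u v
    rw [Equiv.symm_apply_apply, Equiv.symm_apply_apply]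
  let e : B → Fin mm := fun b => φ (SeparationQuotient.mk (toAmal ((0 : Fin (m + 1)), b)))
  let h : Fin mm ≃ Fin mm := (φ.symm.trans hSQ).trans φ
  have h_apply : ∀ x : Fin mm, h x = φ (hSQ (φ.symm x)) := fun _ => rfl
  have hSQ_dist : ∀ u v : SQ, dist (hSQ u) (hSQ v) = dist u v := by
    intro u v
    obtain ⟨p, rfl⟩ := SeparationQuotient.surjective_mk u
    obtain ⟨q, rfl⟩ := SeparationQuotient.surjective_mk v
    rw [hSQ_mk, hSQ_mk, SeparationQuotient.dist_mk, SeparationQuotient.dist_mk,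
      hdist p q]
  -- iterates
  have hconj : ∀ (k : ℕ) (x : Fin mm), (⇑h)^[k] x = φ ((⇑hSQ)^[k] (φ.symm x)) := by
    intro k
    induction k with
    | zero => intro x; simp
    | succ k ih =>
      intro x
      rw [Function.iterate_succ_apply', Function.iterate_succ_apply', ih, h_apply,
        Equiv.symm_apply_apply]
  have hSQiter : ∀ (k : ℕ) (p : Amal (m + 1) B),
      (⇑hSQ)^[k] (SeparationQuotient.mk p) = SeparationQuotient.mk ((⇑hAe)^[k] p) := by
    intro k
    induction k with
    | zero => intro p; rfl
    | succ k ih =>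
      intro p
      rw [Function.iterate_succ_apply', Function.iterate_succ_apply', ih, hSQ_mk]
      rfl
  have hAe_coe : ∀ p : Amal (m + 1) B, hAe p = hA p := fun _ => rfl
  have h0iter : ∀ (k : ℕ) (hk : k ≤ m), ∀ b : B,
      (⇑hAe)^[k] (toAmal ((0 : Fin (m + 1)), b)) = toAmal ((⟨k, by omega⟩ : Fin (m + 1)), b) := by
    intro k
    induction k with
    | zero =>
      intro _ b
      rfl
    | succ k ih =>
      intro hk b
      rw [Function.iterate_succ_apply', ih (by omega) b, hAe_coe]
      show toAmal (h0 (m + 1) g ((⟨k, by omega⟩ : Fin (m + 1)), b)) = _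
      rw [h0_not_last (m + 1) g _ (by show k ≠ m + 1 - 1; omega)]
      have hfin : (⟨k, by omega⟩ : Fin (m + 1)) + 1 = (⟨k + 1, by omega⟩ : Fin (m + 1)) := by
        have hne : (⟨k, by omega⟩ : Fin (m + 1)) ≠ Fin.last m := by
          intro hcon
          have := congrArg Fin.val hcon
          simp at this
          omega
        apply Fin.ext
        rw [Fin.val_add_one, if_neg hne]
      rw [hfin]
  have h0full : ∀ b : B, (⇑hAe)^[m + 1] (toAmal ((0 : Fin (m + 1)), b))
      = toAmal ((0 : Fin (m + 1)), g b) := by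
    intro b
    rw [Function.iterate_succ_apply', h0iter m le_rfl b, hAe_coe]
    show toAmal (h0 (m + 1) g ((⟨m, by omega⟩ : Fin (m + 1)), b)) = _
    rw [h0_last (m + 1) g _ (by show m = m + 1 - 1; omega)]
    refine congrArg toAmal (Prod.ext ?_ rfl)
    show (⟨m, by omega⟩ : Fin (m + 1)) + 1 = 0
    exact Fin.last_add_one m
  have h6 : ∀ b : B, (⇑h)^[m + 1] (e b) = e (g b) := by
    intro b
    rw [hconj (m + 1) (e b)]
    have hs : φ.symm (e b) = SeparationQuotient.mk (toAmal ((0 : Fin (m + 1)), b)) :=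
      Equiv.symm_apply_apply _ _
    rw [hs, hSQiter (m + 1) _, h0full b]
  refine ⟨Fin mm, inferInstance, inferInstance, e, h, ?_, ?_, ?_, ?_, ?_, ?_⟩
  · -- rationality
    intro x y
    obtain ⟨p, hp⟩ := SeparationQuotient.surjective_mk (φ.symm x)
    obtain ⟨q, hq⟩ := SeparationQuotient.surjective_mk (φ.symm y)
    refine ⟨pd hQ A f (m + 1) p q, ?_⟩
    have hx : x = φ (SeparationQuotient.mk p) := by rw [hp, Equiv.apply_symm_apply]
    have hy : y = φ (SeparationQuotient.mk q) := by rw [hq, Equiv.apply_symm_apply]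
    rw [hx, hy, key_dist, SeparationQuotient.dist_mk, dX]
  · -- e isometric
    intro x y
    show dist (φ _) (φ _) = dist x y
    rw [key_dist, SeparationQuotient.dist_mk, dX,
      pd_fst_eq hQ A f (m + 1) (toAmal ((0 : Fin (m + 1)), x)) (toAmal ((0 : Fin (m + 1)), y)) rfl]
    exact qd_spec hQ x y
  · -- h isometric
    intro x y
    rw [h_apply, h_apply, key_dist, hSQ_dist]
    show dist (φ.symm x) (φ.symm y) = dist x y
    rfl
  · -- h extends f
    intro a
    show φ (hSQ (φ.symm (φ _))) = _
    rw [Equiv.symm_apply_apply, hSQ_mk]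
    congr 1
    have hglue : SeparationQuotient.mk (hA (toAmal ((0 : Fin (m + 1)), ((ι A f (0:Fin (m + 1)).val a : A) : B))))
        = SeparationQuotient.mk (hA (toAmal ((Fin.last m : Fin (m + 1)),
            ((ι A f (Fin.last m : Fin (m + 1)).val a : A) : B)))) := by
      rw [SeparationQuotient.mk_eq_mk, Metric.inseparable_iff, hdist, dX]
      show ((pd hQ A f (m + 1) ((0:Fin (m + 1)), ((ι A f (0:Fin (m + 1)).val a : A) : B))
        ((Fin.last m : Fin (m + 1)), ((ι A f (Fin.last m : Fin (m + 1)).val a : A) : B)) : ℚ) : ℝ) = 0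
      rw [pd_glue hQ A f (m + 1) (0 : Fin (m + 1)) (Fin.last m) a]
      norm_num
    have h1 : ((ι A f (0:Fin (m + 1)).val a : A) : B) = (a : B) := rfl
    have h2 : hA (toAmal ((Fin.last m : Fin (m + 1)),
        ((ι A f (Fin.last m : Fin (m + 1)).val a : A) : B)))
        = toAmal ((0 : Fin (m + 1)), ((f a : A) : B)) := by
      show toAmal (h0 (m + 1) g _) = _
      rw [h0_last (m + 1) g (toAmal ((Fin.last m : Fin (m + 1)),
          ((ι A f (Fin.last m : Fin (m + 1)).val a : A) : B))) (by show m = m + 1 - 1; omega)]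
      refine congrArg toAmal (Prod.ext ?_ ?_)
      · show Fin.last m + 1 = 0
        exact Fin.last_add_one m
      · show g ((ι A f (Fin.last m : Fin (m + 1)).val a : A) : B) = ((f a : A) : B)
        exact g_iota A f (m + 1) g hgf a
    rw [h1] at hglue
    rw [hglue, h2]
  · -- range
    intro b
    exact ⟨g b, (h6 b).symm⟩
  · -- h^[n] eq
    intro b
    exact h6 b
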